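/- The matrix G has rank 18 over ℚ, and the kernel of G (as a ℚ-linear map ℚ^19 → ℚ^19) is the one-dimensional subspace spanned by r = (3, 2, 4, 6, 5, 4, 3, 2, 1, 0, -1, -2, -3, -4, -5, -6, -4, -2, -3). (Thus the 19 roots E_0,…,E_18 span the rank 18 lattice M with exactly one relation.) -/

import Mathlib

/-- Adjacency relation of the dual graph: edges `{i, i+1}` for `1 ≤ i ≤ 16`,
together with `{0, 3}` and `{15, 18}`. -/
def adj (i j : ℕ) : Bool :=
  (1 ≤ i && i ≤ 16 && j == i + 1) || (1 ≤ j && j ≤ 16 && i == j + 1) ||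
  (i == 0 && j == 3) || (i == 3 && j == 0) || (i == 15 && j == 18) || (i == 18 && j == 15)

/-- The Gram matrix of the 19 classes `E_0, …, E_18`. -/
def G : Matrix (Fin 19) (Fin 19) ℤ :=
  Matrix.of fun i j => if i = j then -2 else if adj i.val j.val then 1 else 0

/-- The bilinear form `B(u,v) = uᵀ G v`. -/
def B (u v : Fin 19 → ℤ) : ℤ := dotProduct u (G.mulVec v)

/-- The standard basis vector `e_i` of `ℤ^19`. -/
def e (i : Fin 19) : Fin 19 → ℤ := Pi.single i 1

/-- The relation vector `(3; 2,4,6,5,4,3,2,1,0,-1,-2,-3,-4,-5,-6,-4,-2; -3)`. -/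
def r : Fin 19 → ℤ := ![3, 2, 4, 6, 5, 4, 3, 2, 1, 0, -1, -2, -3, -4, -5, -6, -4, -2, -3]

def A : Matrix (Fin 19) (Fin 19) ℤ :=
  !![-24, -15, -30, -45, -36, -27, -18, -9, 0, 0, 0, 0, 0, 0, 0, 0, 0, 0, 0;
  -15, -12, -21, -30, -24, -18, -12, -6, 0, 0, 0, 0, 0, 0, 0, 0, 0, 0, 0;
  -30, -21, -42, -60, -48, -36, -24, -12, 0, 0, 0, 0, 0, 0, 0, 0, 0, 0, 0;
  -45, -30, -60, -90, -72, -54, -36, -18, 0, 0, 0, 0, 0, 0, 0, 0, 0, 0, 0;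
  -36, -24, -48, -72, -60, -45, -30, -15, 0, 0, 0, 0, 0, 0, 0, 0, 0, 0, 0;
  -27, -18, -36, -54, -45, -36, -24, -12, 0, 0, 0, 0, 0, 0, 0, 0, 0, 0, 0;
  -18, -12, -24, -36, -30, -24, -18, -9, 0, 0, 0, 0, 0, 0, 0, 0, 0, 0, 0;
  -9, -6, -12, -18, -15, -12, -9, -6, 0, 0, 0, 0, 0, 0, 0, 0, 0, 0, 0;
  0, 0, 0, 0, 0, 0, 0, 0, 0, 0, 0, 0, 0, 0, 0, 0, 0, 0, 0;
  9, 6, 12, 18, 15, 12, 9, 6, 3, 0, 0, 0, 0, 0, 0, 0, 0, 0, 0;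
  18, 12, 24, 36, 30, 24, 18, 12, 6, 3, 0, 0, 0, 0, 0, 0, 0, 0, 0;
  27, 18, 36, 54, 45, 36, 27, 18, 9, 6, 3, 0, 0, 0, 0, 0, 0, 0, 0;
  36, 24, 48, 72, 60, 48, 36, 24, 12, 9, 6, 3, 0, 0, 0, 0, 0, 0, 0;
  45, 30, 60, 90, 75, 60, 45, 30, 15, 12, 9, 6, 3, 0, 0, 0, 0, 0, 0;
  54, 36, 72, 108, 90, 72, 54, 36, 18, 15, 12, 9, 6, 3, 0, 0, 0, 0, 0;
  63, 42, 84, 126, 105, 84, 63, 42, 21, 18, 15, 12, 9, 6, 3, 0, 0, 0, 0;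
  42, 28, 56, 84, 70, 56, 42, 28, 14, 12, 10, 8, 6, 4, 2, 0, -2, -1, 0;
  21, 14, 28, 42, 35, 28, 21, 14, 7, 6, 5, 4, 3, 2, 1, 0, -1, -2, 0;
  30, 20, 40, 60, 50, 40, 30, 20, 10, 9, 8, 7, 6, 5, 4, 3, 2, 1, 0]

/-- The correction matrix `C = 3·(I - r e₈ᵀ)`. -/
def Cmat : Matrix (Fin 19) (Fin 19) ℤ :=
  Matrix.of fun i j => (if i = j then 3 else 0) - (if j = (8 : Fin 19) then 3 * r i else 0)

lemma hAG : A * G = Cmat := by decide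

lemma hGr : G.mulVec r = 0 := by decide

/-- `G` has rank 18 over `ℚ`, and the kernel of `G` as a `ℚ`-linear map is the
one-dimensional subspace spanned by `r`. -/
theorem G_rank_eighteen_kernel_span :
    (G.map (Int.cast : ℤ → ℚ)).rank = 18 ∧
      ∀ v : Fin 19 → ℚ,
        (G.map (Int.cast : ℤ → ℚ)).mulVec v = 0 ↔ ∃ c : ℚ, v = c • fun i => (r i : ℚ)  := by
  set Gq := G.map (Int.cast : ℤ → ℚ) with hGq
  have hker : ∀ v : Fin 19 → ℚ,
      Gq.mulVec v = 0 ↔ ∃ c : ℚ, v = c • fun i => (r i : ℚ) := by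
    intro v
    constructor
    · intro hv
      have hmap : (A.map (Int.cast : ℤ → ℚ)) * Gq = Cmat.map (Int.cast : ℤ → ℚ) := by
        have h := congrArg
          (fun M : Matrix (Fin 19) (Fin 19) ℤ => M.map ((Int.castRingHom ℚ) : ℤ →+* ℚ)) hAG
        simp only [Matrix.map_mul] at h
        exact h
      have h2 : (Cmat.map (Int.cast : ℤ → ℚ)).mulVec v = 0 := by
        rw [← hmap, ← Matrix.mulVec_mulVec, hv, Matrix.mulVec_zero]
      refine ⟨v 8, ?_⟩
      funext i
      have h3 := congrFun h2 i
      simp only [Matrix.mulVec, dotProduct, Cmat, Matrix.map_apply, Matrix.of_apply,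
        Int.cast_sub, Int.cast_ite, Int.cast_mul, Int.cast_ofNat, Int.cast_zero,
        sub_mul, Finset.sum_sub_distrib, ite_mul, zero_mul,
        Finset.sum_ite_eq, Finset.sum_ite_eq', Finset.mem_univ, if_true,
        Pi.zero_apply] at h3
      have : v i = v 8 * (r i : ℚ) := by
        push_cast at h3 ⊢
        linarith
      simpa using this
    · rintro ⟨c, rfl⟩
      have hGr' : Gq.mulVec (fun i => (r i : ℚ)) = 0 := by
        funext i
        have := (Int.castRingHom ℚ).map_mulVec G r i
        rw [hGr] at this
        simpa [hGq, Function.comp_def] using this.symm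
      rw [Matrix.mulVec_smul, hGr', smul_zero]
  have hrne : (fun i => (r i : ℚ)) ≠ 0 := by
    intro h
    have h8 : ((r 8 : ℤ) : ℚ) = 0 := congrFun h 8
    rw [show r 8 = 1 from rfl] at h8
    norm_num at h8
  have hkereq : LinearMap.ker Gq.mulVecLin = Submodule.span ℚ {fun i => (r i : ℚ)} := by
    ext v
    rw [LinearMap.mem_ker, Matrix.mulVecLin_apply, Submodule.mem_span_singleton, hker v]
    constructor
    · rintro ⟨c, rfl⟩; exact ⟨c, rfl⟩
    · rintro ⟨c, rfl⟩; exact ⟨c, rfl⟩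
  have hrn := Gq.mulVecLin.finrank_range_add_finrank_ker
  rw [hkereq, finrank_span_singleton hrne] at hrn
  simp only [Module.finrank_pi, Fintype.card_fin] at hrn
  constructor
  · have : Gq.rank = Module.finrank ℚ (LinearMap.range Gq.mulVecLin) := rfl
    omega
  · exact hker
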